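/- Let R be a probability measure on a measurable space Ω and let P be a probability measure on Ω with P ≪ R and H(P|R) < ∞. Then H(P|R) = sup { ∫ u dP − ∫ (e^u − 1) dR : u : Ω → ℝ measurable with ∫ e^u dR < ∞ }. -/

import Mathlib

open MeasureTheory Real Filter Classical
open scoped ENNReal

/-- Relative entropy `H(P|R) ∈ [0,∞]`: the integral `∫ log(dP/dR) dP` if `P ≪ R`
(with value `+∞` when `log(dP/dR)` is not `P`-integrable), and `+∞` otherwise. -/
noncomputable def relEntropy {Ω : Type*} [MeasurableSpace Ω] (P R : Measure Ω) : EReal :=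
  if P ≪ R ∧ Integrable (llr P R) P then ((∫ ω, llr P R ω ∂P : ℝ) : EReal) else ⊤

lemma young_st (s t : ℝ) (hs : 0 ≤ s) : s * t ≤ s * Real.log s - s + Real.exp t := by
  rcases eq_or_lt_of_le hs with h | h
  · simp only [← h, zero_mul, sub_zero, zero_sub, neg_zero, zero_add]
    positivity
  · have h1 : t - Real.log s + 1 ≤ Real.exp (t - Real.log s) := Real.add_one_le_exp _
    have h2 : Real.exp (t - Real.log s) = Real.exp t / s := by
      rw [Real.exp_sub, Real.exp_log h]
    rw [h2] at h1
    have h3 := mul_le_mul_of_nonneg_left h1 hs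
    rw [mul_div_cancel₀ _ h.ne'] at h3
    nlinarith

lemma ennnorm_eq_ofReal_add_ofReal_neg (x : ℝ) :
    (‖x‖₊ : ℝ≥0∞) = ENNReal.ofReal x + ENNReal.ofReal (-x) := by
  rcases le_total 0 x with h | h
  · have h0 : ENNReal.ofReal (-x) = 0 := ENNReal.ofReal_of_nonpos (neg_nonpos.2 h)
    rw [h0, add_zero, ← enorm_eq_nnnorm, Real.enorm_eq_ofReal_abs, abs_of_nonneg h]
  · have h0 : ENNReal.ofReal x = 0 := ENNReal.ofReal_of_nonpos h
    rw [h0, zero_add, ← enorm_eq_nnnorm, Real.enorm_eq_ofReal_abs, abs_of_nonpos h]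

lemma ereal_expr_eq {Ω : Type*} [MeasurableSpace Ω] {P : Measure Ω} {u : Ω → ℝ}
    (hu : Integrable u P) (c : ℝ) :
    ((∫⁻ ω, ENNReal.ofReal (u ω) ∂P : ℝ≥0∞) : EReal)
      - ((∫⁻ ω, ENNReal.ofReal (-(u ω)) ∂P : ℝ≥0∞) : EReal)
      - ((c : ℝ) : EReal) = ((∫ ω, u ω ∂P - c : ℝ) : EReal) := by
  set A := ∫⁻ ω, ENNReal.ofReal (u ω) ∂P with hA
  set B := ∫⁻ ω, ENNReal.ofReal (-(u ω)) ∂P with hB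
  have hfin : ∫⁻ ω, (‖u ω‖₊ : ℝ≥0∞) ∂P < ⊤ := hu.2
  have hAB : A + B = ∫⁻ ω, (‖u ω‖₊ : ℝ≥0∞) ∂P := by
    rw [hA, hB, ← lintegral_add_left' (hu.1.aemeasurable.ennreal_ofReal)]
    exact lintegral_congr fun ω => (ennnorm_eq_ofReal_add_ofReal_neg (u ω)).symm
  have hAfin : A ≠ ⊤ := by
    intro h; rw [h, top_add] at hAB; exact absurd hAB.symm hfin.ne
  have hBfin : B ≠ ⊤ := by
    intro h; rw [h, add_top] at hAB; exact absurd hAB.symm hfin.ne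
  have hint := integral_eq_lintegral_pos_part_sub_lintegral_neg_part hu
  have hcoeA : (A : EReal) = ((A.toReal : ℝ) : EReal) := by
    rw [← EReal.toReal_coe_ennreal (x := A)]
    exact (EReal.coe_toReal (by simpa using hAfin) (by simp)).symm
  have hcoeB : (B : EReal) = ((B.toReal : ℝ) : EReal) := by
    rw [← EReal.toReal_coe_ennreal (x := B)]
    exact (EReal.coe_toReal (by simpa using hBfin) (by simp)).symm
  rw [hcoeA, hcoeB, ← EReal.coe_sub, ← EReal.coe_sub, hint]

theorem relEntropy_eq_sup_integrable_exp' {Ω : Type*} [MeasurableSpace Ω]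
    (P R : Measure Ω) [IsProbabilityMeasure P] [IsProbabilityMeasure R] (hPR : P ≪ R)
    (hint : Integrable (llr P R) P) :
    (((∫ ω, llr P R ω ∂P : ℝ)) : EReal) =
      sSup {x : EReal | ∃ u : Ω → ℝ, Measurable u ∧
        Integrable (fun ω => Real.exp (u ω)) R ∧
        x = ((∫⁻ ω, ENNReal.ofReal (u ω) ∂P : ℝ≥0∞) : EReal)
              - ((∫⁻ ω, ENNReal.ofReal (-(u ω)) ∂P : ℝ≥0∞) : EReal)
              - ((∫ ω, (Real.exp (u ω) - 1) ∂ R : ℝ) : EReal)} := by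
  set H : ℝ := ∫ ω, llr P R ω ∂P with hHdef
  set g : Ω → ℝ := fun ω => (P.rnDeriv R ω).toReal with hgdef
  have hgmeas : Measurable g := (Measure.measurable_rnDeriv P R).ennreal_toReal
  have hgnn : ∀ ω, 0 ≤ g ω := fun ω => ENNReal.toReal_nonneg
  have hgint : Integrable g R := Measure.integrable_toReal_rnDeriv
  have hgint1 : ∫ ω, g ω ∂ R = 1 := by
    rw [hgdef, Measure.integral_toReal_rnDeriv hPR]; simp
  have hglogint : Integrable (fun ω => g ω * Real.log (g ω)) R := by
    have := (integrable_rnDeriv_smul_iff hPR (f := llr P R)).mpr hint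
    simpa [llr, smul_eq_mul] using this
  have hglog : ∫ ω, g ω * Real.log (g ω) ∂ R = H := by
    have := integral_rnDeriv_smul hPR (f := llr P R)
    simpa [llr, smul_eq_mul, hHdef] using this
  apply le_antisymm
  · -- H ≤ sSup : use the approximating sequence uₙ
    rw [_root_.le_sSup_iff]
    intro b hb
    -- the sequence of witnesses
    have hmem : ∀ n : ℕ, ((H - ∫ ω, (Real.exp ((fun ω => if g ω = 0 then -(n:ℝ)
        else Real.log (g ω)) ω) - 1) ∂ R : ℝ) : EReal) ∈ {x : EReal | ∃ u : Ω → ℝ, Measurable u ∧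
        Integrable (fun ω => Real.exp (u ω)) R ∧
        x = ((∫⁻ ω, ENNReal.ofReal (u ω) ∂P : ℝ≥0∞) : EReal)
              - ((∫⁻ ω, ENNReal.ofReal (-(u ω)) ∂P : ℝ≥0∞) : EReal)
              - ((∫ ω, (Real.exp (u ω) - 1) ∂ R : ℝ) : EReal)} := by
      intro n
      set u : Ω → ℝ := fun ω => if g ω = 0 then -(n:ℝ) else Real.log (g ω) with hudef
      have humeas : Measurable u := Measurable.ite (hgmeas (measurableSet_singleton 0))
        measurable_const (Real.measurable_log.comp hgmeas)
      have hexple : ∀ ω, Real.exp (u ω) ≤ g ω + 1 := by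
        intro ω
        rw [hudef]
        by_cases h : g ω = 0
        · simp only [h, if_pos]
          have : Real.exp (-(n:ℝ)) ≤ 1 := Real.exp_le_one_iff.mpr (neg_nonpos.2 (Nat.cast_nonneg n))
          linarith [hgnn ω]
        · simp only [h, if_neg, if_false]
          rw [Real.exp_log (lt_of_le_of_ne (hgnn ω) (Ne.symm h))]
          linarith
      have hexpnn : ∀ ω, 0 ≤ Real.exp (u ω) := fun ω => (Real.exp_pos _).le
      have hbnd1 : Integrable (fun ω => g ω + 1) R := hgint.add (integrable_const 1)
      have hexpint : Integrable (fun ω => Real.exp (u ω)) R := by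
        refine Integrable.mono' hbnd1
          ((Real.measurable_exp.comp humeas).aestronglyMeasurable)
          (ae_of_all _ fun ω => ?_)
        rw [Real.norm_eq_abs, abs_of_nonneg (hexpnn ω)]
        exact hexple ω
      have haeP : u =ᵐ[P] llr P R := by
        have h1 : ∀ᵐ ω ∂P, 0 < P.rnDeriv R ω := Measure.rnDeriv_pos hPR
        have h2 : ∀ᵐ ω ∂P, P.rnDeriv R ω < ⊤ := hPR.ae_le (Measure.rnDeriv_lt_top P R)
        filter_upwards [h1, h2] with ω hω1 hω2
        have : g ω ≠ 0 := by
          rw [hgdef]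
          simp only [ne_eq, ENNReal.toReal_eq_zero_iff]
          push_neg
          exact ⟨hω1.ne', hω2.ne⟩
        rw [hudef]
        simp only [this, if_neg, if_false]
        rfl
      have huint : Integrable u P := hint.congr haeP.symm
      refine ⟨u, humeas, hexpint, ?_⟩
      rw [ereal_expr_eq huint, integral_congr_ae haeP, ← hHdef]
    -- every member is ≤ b; take the limit
    have hble : ∀ n : ℕ, ((H - Real.exp (-(n:ℝ)) : ℝ) : EReal) ≤ b := by
      intro n
      refine le_trans ?_ (hb (hmem n))
      rw [EReal.coe_le_coe_iff]
      have : ∫ ω, (Real.exp ((fun ω => if g ω = 0 then -(n:ℝ)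
          else Real.log (g ω)) ω) - 1) ∂ R ≤ Real.exp (-(n:ℝ)) := by
        set u : Ω → ℝ := fun ω => if g ω = 0 then -(n:ℝ) else Real.log (g ω) with hudef
        have humeas : Measurable u := Measurable.ite (hgmeas (measurableSet_singleton 0))
          measurable_const (Real.measurable_log.comp hgmeas)
        have hexple : ∀ ω, Real.exp (u ω) ≤ g ω + Real.exp (-(n:ℝ)) := by
          intro ω
          rw [hudef]
          by_cases h : g ω = 0
          · simp only [h, if_pos]
            linarith [hgnn ω]
          · simp only [h, if_neg, if_false]
            rw [Real.exp_log (lt_of_le_of_ne (hgnn ω) (Ne.symm h))]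
            linarith [Real.exp_pos (-(n:ℝ))]
        have hexpnn : ∀ ω, 0 ≤ Real.exp (u ω) := fun ω => (Real.exp_pos _).le
        have hbnd : Integrable (fun ω => g ω + Real.exp (-(n:ℝ))) R :=
          hgint.add (integrable_const _)
        have hexpint : Integrable (fun ω => Real.exp (u ω)) R := by
          refine Integrable.mono' hbnd
            ((Real.measurable_exp.comp humeas).aestronglyMeasurable)
            (ae_of_all _ fun ω => ?_)
          rw [Real.norm_eq_abs, abs_of_nonneg (hexpnn ω)]
          exact hexple ω
        have h1 : ∫ ω, (Real.exp (u ω) - 1) ∂ R = ∫ ω, Real.exp (u ω) ∂ R - 1 := by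
          rw [integral_sub hexpint (integrable_const 1), integral_const]
          simp
        have h2 : ∫ ω, Real.exp (u ω) ∂ R ≤ ∫ ω, (g ω + Real.exp (-(n:ℝ))) ∂ R :=
          integral_mono hexpint hbnd hexple
        have hgint' : Integrable (fun ω => g ω) R := hgint
        have h3 : ∫ ω, (g ω + Real.exp (-(n:ℝ))) ∂ R = 1 + Real.exp (-(n:ℝ)) := by
          have h4 := integral_add hgint' (integrable_const (Real.exp (-(n:ℝ)))) (μ := R)
          rw [h4, hgint1, integral_const]
          simp
        rw [h1]
        rw [h3] at h2
        linarith
      linarith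
    -- conclude H ≤ b
    by_contra hcon
    push_neg at hcon
    have hbne_bot : b ≠ ⊥ := by
      intro h
      have := hble 0
      rw [h, le_bot_iff] at this
      exact (EReal.coe_ne_bot _) this
    have hbne_top : b ≠ ⊤ := (lt_of_lt_of_le hcon le_top).ne
    set r : ℝ := b.toReal with hrdef
    have hbr : b = (r : EReal) := (EReal.coe_toReal hbne_top hbne_bot).symm
    rw [hbr] at hcon hble
    have hrH : r < H := by exact_mod_cast hcon
    have hrle : ∀ n : ℕ, H - Real.exp (-(n:ℝ)) ≤ r := by
      intro n; exact_mod_cast hble n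
    -- find n with exp(-n) < H - r
    have htend : Tendsto (fun n : ℕ => Real.exp (-(n:ℝ))) atTop (nhds 0) := by
      have : Tendsto (fun x : ℝ => Real.exp (-x)) atTop (nhds 0) :=
        Real.tendsto_exp_neg_atTop_nhds_zero
      exact this.comp tendsto_natCast_atTop_atTop
    have heps : ∀ᶠ n : ℕ in atTop, Real.exp (-(n:ℝ)) < H - r :=
      htend.eventually (eventually_lt_nhds (by linarith : (0:ℝ) < H - r)) |>.mono
        (fun n hn => hn)
    obtain ⟨n, hn⟩ := heps.exists
    linarith [hrle n]
  · -- sSup ≤ H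
    apply sSup_le
    rintro x ⟨u, humeas, hexpint, hx⟩
    -- positive part of u is P-integrable
    have hyoung_pos : ∀ ω, g ω * max (u ω) 0 ≤
        g ω * Real.log (g ω) - g ω + (Real.exp (u ω) + 1) := by
      intro ω
      have := young_st (g ω) (max (u ω) 0) (hgnn ω)
      have hle : Real.exp (max (u ω) 0) ≤ Real.exp (u ω) + 1 := by
        rcases le_total (u ω) 0 with h | h
        · rw [max_eq_right h]; simp [Real.exp_zero]; positivity
        · rw [max_eq_left h]; linarith
      linarith
    have hbint : Integrable (fun ω => g ω * Real.log (g ω) - g ω + (Real.exp (u ω) + 1)) R :=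
      (hglogint.sub hgint).add (hexpint.add (integrable_const 1))
    have hgupos_int : Integrable (fun ω => g ω * max (u ω) 0) R := by
      refine Integrable.mono' hbint
        ((hgmeas.mul (humeas.max measurable_const)).aestronglyMeasurable)
        (ae_of_all _ fun ω => ?_)
      rw [Real.norm_eq_abs, abs_of_nonneg (mul_nonneg (hgnn ω) (le_max_right _ _))]
      exact hyoung_pos ω
    have hupos_int : Integrable (fun ω => max (u ω) 0) P := by
      refine (integrable_rnDeriv_smul_iff hPR).mp ?_
      simpa [smul_eq_mul, hgdef] using hgupos_int
    have hafin : ∫⁻ ω, ENNReal.ofReal (u ω) ∂P ≠ ⊤ := by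
      have heq : ∀ ω, ENNReal.ofReal (u ω) = ENNReal.ofReal (max (u ω) 0) := by
        intro ω
        rcases le_total (u ω) 0 with h | h
        · rw [max_eq_right h, ENNReal.ofReal_of_nonpos h, ENNReal.ofReal_zero]
        · rw [max_eq_left h]
      rw [lintegral_congr heq]
      refine ne_of_lt (lt_of_le_of_lt ?_ hupos_int.2)
      exact lintegral_mono fun ω => Real.ofReal_le_enorm _
    by_cases hbtop : ∫⁻ ω, ENNReal.ofReal (-(u ω)) ∂P = ⊤
    · -- x = ⊥
      rw [hx, hbtop]
      rw [EReal.coe_ennreal_top, EReal.sub_top]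
      simp [EReal.bot_sub]
    · -- u is P-integrable
      have huint : Integrable u P := by
        constructor
        · exact humeas.aestronglyMeasurable
        · rw [HasFiniteIntegral]
          have heq : ∫⁻ ω, (‖u ω‖₊ : ℝ≥0∞) ∂P
              = (∫⁻ ω, ENNReal.ofReal (u ω) ∂P) + ∫⁻ ω, ENNReal.ofReal (-(u ω)) ∂P := by
            rw [← lintegral_add_left' (humeas.aemeasurable.ennreal_ofReal)]
            exact lintegral_congr fun ω => ennnorm_eq_ofReal_add_ofReal_neg (u ω)
          simp only [enorm_eq_nnnorm]
          rw [heq]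
          exact ENNReal.add_lt_top.mpr ⟨lt_top_iff_ne_top.mpr hafin,
            lt_top_iff_ne_top.mpr hbtop⟩
      rw [hx, ereal_expr_eq huint]
      rw [EReal.coe_le_coe_iff]
      -- real inequality: ∫ u dP - (∫ exp u dR - 1) ≤ H via Young
      have hguint : Integrable (fun ω => g ω * u ω) R := by
        have := (integrable_rnDeriv_smul_iff hPR (f := u)).mpr huint
        simpa [smul_eq_mul, hgdef] using this
      have hyoung : ∀ ω, g ω * u ω ≤ g ω * Real.log (g ω) - g ω + Real.exp (u ω) :=
        fun ω => young_st (g ω) (u ω) (hgnn ω)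
      have hmono : ∫ ω, g ω * u ω ∂ R
          ≤ ∫ ω, (g ω * Real.log (g ω) - g ω + Real.exp (u ω)) ∂ R :=
        integral_mono hguint ((hglogint.sub hgint).add hexpint) hyoung
      have hchg : ∫ ω, g ω * u ω ∂ R = ∫ ω, u ω ∂P := by
        have := integral_rnDeriv_smul hPR (f := u)
        simpa [smul_eq_mul, hgdef] using this
      have hgint' : Integrable (fun ω => g ω) R := hgint
      have hrhs : ∫ ω, (g ω * Real.log (g ω) - g ω + Real.exp (u ω)) ∂ R
          = H - 1 + ∫ ω, Real.exp (u ω) ∂ R := by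
        have hsub : Integrable (fun ω => g ω * Real.log (g ω) - g ω) R := hglogint.sub hgint'
        have h4 := integral_add hsub hexpint
        have h5 := integral_sub hglogint hgint'
        rw [h4, h5, hglog, hgint1]
      have hc : ∫ ω, (Real.exp (u ω) - 1) ∂ R = ∫ ω, Real.exp (u ω) ∂ R - 1 := by
        rw [integral_sub hexpint (integrable_const 1), integral_const]
        simp
      rw [hchg, hrhs] at hmono
      rw [hc]
      linarith


/-- For `P ≪ R` with `H(P|R) < ∞`,
`H(P|R) = sup { ∫ u dP − ∫ (e^u − 1) dR : u measurable, ∫ e^u dR < ∞ }`.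
The integral `∫ u dP` is encoded in `EReal` as `∫⁻ u⁺ dP − ∫⁻ u⁻ dP` (every admissible
`u` is in fact `P`-integrable, so both parts are finite). -/
theorem relEntropy_eq_sup_integrable_exp {Ω : Type*} [MeasurableSpace Ω]
    (P R : Measure Ω) [IsProbabilityMeasure P] [IsProbabilityMeasure R] (hPR : P ≪ R)
    (hH : relEntropy P R < ⊤) :
    relEntropy P R =
      sSup {x : EReal | ∃ u : Ω → ℝ, Measurable u ∧
        Integrable (fun ω => Real.exp (u ω)) R ∧
        x = ((∫⁻ ω, ENNReal.ofReal (u ω) ∂P : ℝ≥0∞) : EReal)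
              - ((∫⁻ ω, ENNReal.ofReal (-(u ω)) ∂P : ℝ≥0∞) : EReal)
              - ((∫ ω, (Real.exp (u ω) - 1) ∂ R : ℝ) : EReal)} := by
  have hcond : P ≪ R ∧ Integrable (llr P R) P := by
    by_contra h
    rw [relEntropy, if_neg h] at hH
    exact lt_irrefl _ hH
  rw [relEntropy, if_pos hcond]
  exact relEntropy_eq_sup_integrable_exp' P R hPR hcond.2
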